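/- For all positive integers n, a, b and real q with 0 < q < 1: ∑_{n ≥ k_1 ≥ ⋯ ≥ k_a ≥ 1} (∏_{j=1}^{a-1} q^{k_j}/[k_j]_q) · q^{k_a}/[k_a]_q^b equals ∑_{n ≥ k_1 ≥ ⋯ ≥ k_b ≥ 1} (-1)^{k_1+1} q^{k_1(k_1+1)/2} C_q(n,k_1) q^{(a-1)k_1}/[k_1]_q^a · ∏_{j=2}^{b} 1/[k_j]_q. (That is, Z_n[{1}^{a-1}, b] = A_n[a, {1}^{b-1}].) -/

import Mathlib

/-- Gaussian binomial coefficient, vanishing unless `k ≤ n`. -/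
noncomputable def qbinom (q : ℝ) (n k : ℕ) : ℝ :=
  if k ≤ n then ∏ j ∈ Finset.Icc 1 k, (1 - q ^ (n - k + j)) / (1 - q ^ j) else 0

/-- The `q`-analog of a natural number: `[k]_q = (1-q^k)/(1-q)`. -/
noncomputable def qnum (q : ℝ) (k : ℕ) : ℝ := (1 - q ^ k) / (1 - q)

/-- `Zn q n [s₁,…,s_m] = ∑_{n ≥ k₁ ≥ ⋯ ≥ k_m ≥ 1} ∏_j q^{k_j} [k_j]_q^{-s_j}`. -/
noncomputable def Zn (q : ℝ) : ℕ → List ℕ → ℝ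
  | _, [] => 1
  | n, s :: t => ∑ k ∈ Finset.Icc 1 n, q ^ k / (qnum q k) ^ s * Zn q k t

/-- `Wn q n [s₁,…,s_m] = ∑_{n ≥ k₁ ≥ ⋯ ≥ k_m ≥ 1} ∏_j q^{(s_j-1) k_j} [k_j]_q^{-s_j}`. -/
noncomputable def Wn (q : ℝ) : ℕ → List ℕ → ℝ
  | _, [] => 1
  | n, s :: t => ∑ k ∈ Finset.Icc 1 n,
      q ^ (((s : ℤ) - 1) * (k : ℤ)) / (qnum q k) ^ s * Wn q k t

/-- `An q n [s₁,…,s_m] = ∑_{n ≥ k₁ ≥ ⋯ ≥ k_m ≥ 1} (-1)^{k₁+1} q^{k₁(k₁+1)/2} C_q(n,k₁)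
    ∏_j q^{(s_j-1) k_j} [k_j]_q^{-s_j}`. -/
noncomputable def An (q : ℝ) (n : ℕ) : List ℕ → ℝ
  | [] => 1
  | s :: t => ∑ k ∈ Finset.Icc 1 n,
      (-1 : ℝ) ^ (k + 1) * q ^ (k * (k + 1) / 2) * qbinom q n k *
        (q ^ (((s : ℤ) - 1) * (k : ℤ)) / (qnum q k) ^ s) * Wn q k t

noncomputable def Fq (q : ℝ) (n : ℕ) : ℝ := ∏ j ∈ Finset.Ioc 0 n, (1 - q ^ j)

variable {q : ℝ}

lemma one_sub_pow_pos (hq0 : 0 < q) (hq1 : q < 1) {j : ℕ} (hj : 0 < j) : 0 < 1 - q ^ j := by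
  have : q ^ j < 1 := pow_lt_one₀ hq0.le hq1 hj.ne'
  linarith

lemma Fq_pos (hq0 : 0 < q) (hq1 : q < 1) (n : ℕ) : 0 < Fq q n :=
  Finset.prod_pos fun j hj => one_sub_pow_pos hq0 hq1 (Finset.mem_Ioc.1 hj).1

lemma Fq_succ (q : ℝ) (n : ℕ) : Fq q (n+1) = Fq q n * (1 - q ^ (n+1)) :=
  Finset.prod_Ioc_succ_top (Nat.zero_le _) _

lemma Fq_zero (q : ℝ) : Fq q 0 = 1 := by simp [Fq]

lemma qbinom_of_gt {n k : ℕ} (h : n < k) : qbinom q n k = 0 := if_neg (by omega)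

lemma qbinom_eq (hq0 : 0 < q) (hq1 : q < 1) {n k : ℕ} (hk : k ≤ n) :
    qbinom q n k = Fq q n / (Fq q (n-k) * Fq q k) := by
  have hIcc : ∀ m : ℕ, Finset.Icc 1 m = Finset.Ioc 0 m := fun m => by
    rw [← Finset.Icc_add_one_left_eq_Ioc, zero_add]
  rw [qbinom, if_pos hk, Finset.prod_div_distrib, hIcc]
  have hnum : ∏ j ∈ Finset.Ioc 0 k, (1 - q ^ (n - k + j)) = ∏ j ∈ Finset.Ioc (n-k) n, (1 - q ^ j) := by
    rw [show Finset.Ioc (n-k) n = Finset.Ioc (n-k+0) (n-k+k) by congr 1; omega,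
      ← Finset.map_add_left_Ioc, Finset.prod_map]
    simp [addLeftEmbedding_apply]
  have hden : (∏ j ∈ Finset.Ioc 0 k, (1 - q ^ j)) = Fq q k := rfl
  have hsplit : Fq q (n-k) * ∏ j ∈ Finset.Ioc (n-k) n, (1 - q ^ j) = Fq q n := by
    rw [Fq, Fq, Finset.prod_Ioc_consecutive _ (Nat.zero_le _) (Nat.sub_le n k)]
  have h1 := (Fq_pos hq0 hq1 (n-k)).ne'
  rw [hnum, hden, ← hsplit, mul_div_mul_left _ _ h1]

lemma qbinom_zero (q : ℝ) (n : ℕ) : qbinom q n 0 = 1 := by simp [qbinom]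

lemma qbinom_self (hq0 : 0 < q) (hq1 : q < 1) (n : ℕ) : qbinom q n n = 1 := by
  rw [qbinom_eq hq0 hq1 le_rfl, Nat.sub_self, Fq_zero, one_mul,
    div_self (Fq_pos hq0 hq1 n).ne']

lemma absorb (hq0 : 0 < q) (hq1 : q < 1) (n k : ℕ) :
    (1 - q ^ (k+1)) * qbinom q (n+1) (k+1) = (1 - q ^ (n+1)) * qbinom q n k := by
  rcases le_or_gt k n with h | h
  · rw [qbinom_eq hq0 hq1 (by omega : k+1 ≤ n+1), qbinom_eq hq0 hq1 h,
      show n+1-(k+1) = n-k by omega, Fq_succ, Fq_succ]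
    have h1 := (Fq_pos hq0 hq1 (n-k)).ne'
    have h2 := (Fq_pos hq0 hq1 k).ne'
    have h3 := (one_sub_pow_pos hq0 hq1 (Nat.succ_pos k)).ne'
    field_simp
  · rw [qbinom_of_gt (by omega), qbinom_of_gt h, mul_zero, mul_zero]

lemma pascal2 (hq0 : 0 < q) (hq1 : q < 1) (n k : ℕ) :
    qbinom q (n+1) (k+1) = qbinom q n k + q ^ (k+1) * qbinom q n (k+1) := by
  rcases lt_or_ge n k with h | h
  · rw [qbinom_of_gt (by omega), qbinom_of_gt h, qbinom_of_gt (by omega)]; ring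
  rcases eq_or_lt_of_le h with rfl | h
  · rw [qbinom_self hq0 hq1, qbinom_self hq0 hq1, qbinom_of_gt (by omega)]; ring
  · rw [qbinom_eq hq0 hq1 (by omega : k+1 ≤ n+1), qbinom_eq hq0 hq1 (by omega : k ≤ n),
      qbinom_eq hq0 hq1 (by omega : k+1 ≤ n),
      show n+1-(k+1) = n-k by omega, Fq_succ q n, Fq_succ q k,
      show n-k = (n-(k+1))+1 by omega, Fq_succ q (n-(k+1))]
    have h1 := (Fq_pos hq0 hq1 (n-(k+1))).ne'
    have h2 := (Fq_pos hq0 hq1 k).ne'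
    have h3 := (one_sub_pow_pos hq0 hq1 (Nat.succ_pos k)).ne'
    have h4 := (one_sub_pow_pos hq0 hq1 (show 0 < n-(k+1)+1 by omega)).ne'
    have hqq : q ^ (k+1) * q ^ (n-(k+1)+1) = q ^ (n+1) := by
      rw [← pow_add]; congr 1; omega
    have key : (1 - q^(n+1)) = (1 - q^(k+1)) + q^(k+1) * (1 - q^(n-(k+1)+1)) := by
      linear_combination hqq
    rw [key]
    set u := (1 - q^(k+1)) with hu
    set v := (1 - q ^ (n - (k + 1) + 1)) with hv
    set c := q^(k+1) with hc
    set A := Fq q (n-(k+1)) with hA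
    set B := Fq q k with hB
    field_simp

lemma pascal1 (hq0 : 0 < q) (hq1 : q < 1) (n k : ℕ) (hk : k ≤ n) :
    qbinom q (n+1) (k+1) = qbinom q n (k+1) + q ^ (n-k) * qbinom q n k := by
  rcases eq_or_lt_of_le hk with rfl | h
  · rw [qbinom_self hq0 hq1, qbinom_self hq0 hq1, qbinom_of_gt (by omega), Nat.sub_self]; ring
  · rw [qbinom_eq hq0 hq1 (by omega : k+1 ≤ n+1), qbinom_eq hq0 hq1 (by omega : k ≤ n),
      qbinom_eq hq0 hq1 (by omega : k+1 ≤ n),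
      show n+1-(k+1) = n-k by omega, Fq_succ q n, Fq_succ q k,
      show n-k = (n-(k+1))+1 by omega, Fq_succ q (n-(k+1))]
    have h1 := (Fq_pos hq0 hq1 (n-(k+1))).ne'
    have h2 := (Fq_pos hq0 hq1 k).ne'
    have h3 := (one_sub_pow_pos hq0 hq1 (Nat.succ_pos k)).ne'
    have h4 := (one_sub_pow_pos hq0 hq1 (show 0 < n-(k+1)+1 by omega)).ne'
    have hqq : q ^ (n-(k+1)+1) * q ^ (k+1) = q ^ (n+1) := by
      rw [← pow_add]; congr 1; omega
    have key : (1 - q^(n+1)) = (1 - q^(n-(k+1)+1)) + q^(n-(k+1)+1) * (1 - q^(k+1)) := by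
      linear_combination hqq
    rw [key]
    set u := (1 - q^(k+1)) with hu
    set v := (1 - q ^ (n - (k + 1) + 1)) with hv
    set c := q^(n-(k+1)+1) with hc
    set A := Fq q (n-(k+1)) with hA
    set B := Fq q k with hB
    field_simp

lemma qnum_pos (hq0 : 0 < q) (hq1 : q < 1) {k : ℕ} (hk : 0 < k) : 0 < qnum q k := by
  have h1 := one_sub_pow_pos hq0 hq1 hk
  have h2 : (0:ℝ) < 1 - q := by linarith
  exact div_pos h1 h2

/-- division form of the absorption identity -/
lemma absorb_div (hq0 : 0 < q) (hq1 : q < 1) (n k : ℕ) :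
    qbinom q n k / qnum q (k+1) = qbinom q (n+1) (k+1) / qnum q (n+1) := by
  have h1 := (qnum_pos hq0 hq1 (Nat.succ_pos n)).ne'
  have h2 := (qnum_pos hq0 hq1 (Nat.succ_pos k)).ne'
  have h3 : (1:ℝ) - q ≠ 0 := by linarith
  rw [div_eq_div_iff h2 h1, qnum, qnum]
  have habs := absorb hq0 hq1 n k
  field_simp
  simp only [Nat.succ_eq_add_one] at *
  linear_combination -habs

lemma tri_succ (j : ℕ) : (j+1)*(j+2)/2 = j*(j+1)/2 + (j+1) := by
  rw [show (j+1)*(j+2) = j*(j+1) + 2*(j+1) by ring, Nat.add_mul_div_left _ _ (by norm_num : 0 < 2)]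

lemma Spartial (hq0 : 0 < q) (hq1 : q < 1) (m : ℕ) (j : ℕ) :
    ∑ k ∈ Finset.Icc 1 j, ((-1:ℝ)^(k+1) * q^(k*(k-1)/2) * qbinom q (m+1) k)
      = 1 - (-1:ℝ)^j * q^(j*(j+1)/2) * qbinom q m j := by
  induction j with
  | zero => simp [qbinom_zero]
  | succ j ih =>
    rw [Finset.sum_Icc_succ_top (by omega), ih]
    have e1 : (j+1)*((j+1)-1)/2 = j*(j+1)/2 := by
      rw [Nat.add_sub_cancel, Nat.mul_comm]
    have e2 : (j+1)*((j+1)+1)/2 = j*(j+1)/2 + (j+1) := by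
      rw [show (j+1)+1 = j+2 from rfl]; exact tri_succ j
    rw [e1, e2, pow_add]
    have hp := pascal2 hq0 hq1 m j
    linear_combination ((-1:ℝ)^j * q^(j*(j+1)/2)) * hp

lemma Stail (hq0 : 0 < q) (hq1 : q < 1) (m i : ℕ) (hi : i ≤ m+1) :
    ∑ k ∈ Finset.Ioc i (m+1), ((-1:ℝ)^(k+1) * q^(k*(k-1)/2) * qbinom q (m+1) k)
      = (-1:ℝ)^i * q^(i*(i+1)/2) * qbinom q m i := by
  have hIcc : ∀ x : ℕ, Finset.Icc 1 x = Finset.Ioc 0 x := fun x => by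
    rw [← Finset.Icc_add_one_left_eq_Ioc, zero_add]
  have h1 := Spartial hq0 hq1 m i
  have h2 := Spartial hq0 hq1 m (m+1)
  rw [qbinom_of_gt (by omega), mul_zero] at h2
  rw [hIcc] at h1 h2
  have h3 := Finset.sum_Ioc_consecutive
    (fun k => ((-1:ℝ)^(k+1) * q^(k*(k-1)/2) * qbinom q (m+1) k)) (Nat.zero_le i) hi
  rw [h1, h2] at h3
  linarith [h3]

lemma Wn_one_cons (k : ℕ) (t : List ℕ) :
    Wn q k ((1:ℕ) :: t) = ∑ j ∈ Finset.Icc 1 k, (1/(qnum q j)) * Wn q j t := by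
  rw [Wn]
  refine Finset.sum_congr rfl fun j _ => ?_
  norm_num

lemma Bsum (hq0 : 0 < q) (hq1 : q < 1) (b : ℕ) : ∀ m : ℕ,
    ∑ k ∈ Finset.Icc 1 (m+1),
        ((-1:ℝ)^(k+1) * q^(k*(k-1)/2) * qbinom q (m+1) k * Wn q k (List.replicate b 1))
      = 1/(qnum q (m+1))^b := by
  induction b with
  | zero =>
    intro m
    have h2 := Spartial hq0 hq1 m (m+1)
    rw [qbinom_of_gt (by omega), mul_zero, sub_zero] at h2
    simpa [Wn] using h2
  | succ b ih =>
    intro m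
    rw [List.replicate_succ]
    have step1 : ∀ k, ((-1:ℝ)^(k+1) * q^(k*(k-1)/2) * qbinom q (m+1) k
          * Wn q k ((1:ℕ) :: List.replicate b 1))
        = ∑ j ∈ Finset.Icc 1 k, ((-1:ℝ)^(k+1) * q^(k*(k-1)/2) * qbinom q (m+1) k)
            * ((1/(qnum q j)) * Wn q j (List.replicate b 1)) := by
      intro k
      rw [Wn_one_cons, Finset.mul_sum]
    simp only [step1]
    rw [Finset.sum_comm' (t' := Finset.Icc 1 (m+1))
      (s' := fun j => Finset.Ioc (j-1) (m+1))
      (fun x y => by simp only [Finset.mem_Icc, Finset.mem_Ioc]; omega)]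
    have hterm : ∀ j ∈ Finset.Icc 1 (m+1),
        (∑ k ∈ Finset.Ioc (j-1) (m+1), ((-1:ℝ)^(k+1) * q^(k*(k-1)/2) * qbinom q (m+1) k)
            * ((1/(qnum q j)) * Wn q j (List.replicate b 1)))
        = (1/(qnum q (m+1))) * ((-1:ℝ)^(j+1) * q^(j*(j-1)/2) * qbinom q (m+1) j
            * Wn q j (List.replicate b 1)) := by
      intro j hj
      rw [Finset.mem_Icc] at hj
      obtain ⟨i, rfl⟩ : ∃ i, j = i + 1 := ⟨j - 1, by omega⟩
      rw [← Finset.sum_mul, show i+1-1 = i from rfl, Stail hq0 hq1 m i (by omega)]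
      have e1 : (i+1)*i/2 = i*(i+1)/2 := by rw [Nat.mul_comm]
      have habs0 := absorb_div hq0 hq1 m i
      have hq2 : qnum q (i+1) ≠ 0 := (qnum_pos hq0 hq1 (by omega)).ne'
      have hq3 : qnum q (m+1) ≠ 0 := (qnum_pos hq0 hq1 (by omega)).ne'
      rw [div_eq_div_iff hq2 hq3] at habs0
      rw [e1]
      field_simp
      linear_combination ((-1:ℝ)^i * Wn q (i+1) (List.replicate b 1)) * habs0
    rw [Finset.sum_congr rfl hterm, ← Finset.mul_sum, ih m, pow_succ]
    ring

lemma habs' (hq0 : 0 < q) (hq1 : q < 1) (n i : ℕ) :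
    qbinom q n i * qnum q (n+1) = qbinom q (n+1) (i+1) * qnum q (i+1) := by
  have h := absorb_div hq0 hq1 n i
  have hq2 : qnum q (i+1) ≠ 0 := (qnum_pos hq0 hq1 (by omega)).ne'
  have hq3 : qnum q (n+1) ≠ 0 := (qnum_pos hq0 hq1 (by omega)).ne'
  rw [div_eq_div_iff hq2 hq3] at h
  exact h

lemma key2 (hq0 : 0 < q) (hq1 : q < 1) (n i a : ℕ) (hi : i ≤ n) :
    q^(n-i) * qbinom q n i * (q^((a+1)*(i+1)) / (qnum q (i+1))^(a+2))
      = q^(n+1)/qnum q (n+1) * (qbinom q (n+1) (i+1) * (q^(a*(i+1)) / (qnum q (i+1))^(a+1))) := by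
  have hmerge : q^(n-i) * q^(i+1) = q^(n+1) := by rw [← pow_add]; congr 1; omega
  have hsplit : q^((a+1)*(i+1)) = q^(a*(i+1)) * q^(i+1) := by
    rw [← pow_add]; congr 1; ring
  have adiv := absorb_div hq0 hq1 n i
  rw [hsplit, show a+2 = (a+1)+1 from rfl, pow_succ]
  calc q^(n-i) * qbinom q n i *
          (q^(a*(i+1)) * q^(i+1) / ((qnum q (i+1))^(a+1) * qnum q (i+1)))
      = (q^(a*(i+1))/(qnum q (i+1))^(a+1)) * (q^(n-i) * q^(i+1))
          * (qbinom q n i / qnum q (i+1)) := by ring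
    _ = (q^(a*(i+1))/(qnum q (i+1))^(a+1)) * q^(n+1)
          * (qbinom q (n+1) (i+1) / qnum q (n+1)) := by rw [hmerge, adiv]
    _ = q^(n+1)/qnum q (n+1) * (qbinom q (n+1) (i+1) * (q^(a*(i+1)) / (qnum q (i+1))^(a+1))) := by
        ring

lemma key1 (hq0 : 0 < q) (hq1 : q < 1) (n i : ℕ) (hi : i ≤ n) :
    q^((i+1)*((i+1)+1)/2) * q^(n-i) * (qbinom q n i / qnum q (i+1))
      = q^(n+1)/qnum q (n+1) * (q^((i+1)*((i+1)-1)/2) * qbinom q (n+1) (i+1)) := by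
  have etri : q^((i+1)*((i+1)+1)/2) * q^(n-i) = q^((i+1)*((i+1)-1)/2) * q^(n+1) := by
    rw [← pow_add, ← pow_add]
    congr 1
    have h1 := tri_succ i
    have h2 : (i+1)*((i+1)-1)/2 = i*(i+1)/2 := by
      rw [Nat.add_sub_cancel, Nat.mul_comm]
    have h3 : (i+1)*((i+1)+1)/2 = (i+1)*(i+2)/2 := rfl
    omega
  rw [absorb_div hq0 hq1 n i, etri]
  ring

lemma An_cons (q : ℝ) (n : ℕ) (s : ℕ) (t : List ℕ) :
    An q n (s :: t) = ∑ k ∈ Finset.Icc 1 n,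
      (-1 : ℝ) ^ (k + 1) * q ^ (k * (k + 1) / 2) * qbinom q n k *
        (q ^ (((s : ℤ) - 1) * (k : ℤ)) / (qnum q k) ^ s) * Wn q k t := rfl

lemma zp (q : ℝ) (s k : ℕ) : q ^ (((((s+1:ℕ)):ℤ) - 1) * (k:ℤ)) = q ^ (s*k) := by
  have h : ((((s+1:ℕ)):ℤ) - 1) * (k:ℤ) = ((s*k : ℕ) : ℤ) := by push_cast; ring
  rw [h, zpow_natCast]

lemma StepA2 (hq0 : 0 < q) (hq1 : q < 1) (n a : ℕ) (t : List ℕ) :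
    An q (n+1) ((a+2) :: t) = An q n ((a+2) :: t)
      + q^(n+1)/qnum q (n+1) * An q (n+1) ((a+1) :: t) := by
  rw [An_cons, An_cons, An_cons]
  have hlast : qbinom q n (n+1) = 0 := qbinom_of_gt (by omega)
  have hext : (∑ k ∈ Finset.Icc 1 n,
        (-1 : ℝ) ^ (k + 1) * q ^ (k * (k + 1) / 2) * qbinom q n k *
          (q ^ ((((a+2:ℕ) : ℤ) - 1) * (k : ℤ)) / qnum q k ^ (a+2)) * Wn q k t)
      = ∑ k ∈ Finset.Icc 1 (n+1),
        (-1 : ℝ) ^ (k + 1) * q ^ (k * (k + 1) / 2) * qbinom q n k *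
          (q ^ ((((a+2:ℕ) : ℤ) - 1) * (k : ℤ)) / qnum q k ^ (a+2)) * Wn q k t := by
    rw [Finset.sum_Icc_succ_top (by omega : 1 ≤ n+1), hlast]
    ring
  rw [hext, Finset.mul_sum, ← Finset.sum_add_distrib]
  refine Finset.sum_congr rfl fun k hk => ?_
  rw [Finset.mem_Icc] at hk
  obtain ⟨i, rfl⟩ : ∃ i, k = i + 1 := ⟨k - 1, by omega⟩
  rw [zp q (a+1), zp q a]
  have hp := pascal1 hq0 hq1 n i (by omega)
  have hk2 := key2 hq0 hq1 n i a (by omega)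
  linear_combination ((-1:ℝ)^(i+1+1) * q^((i+1)*((i+1)+1)/2) * Wn q (i+1) t
      * (q^((a+1)*(i+1)) / (qnum q (i+1))^(a+2))) * hp
    + ((-1:ℝ)^(i+1+1) * q^((i+1)*((i+1)+1)/2) * Wn q (i+1) t) * hk2

lemma StepA1 (hq0 : 0 < q) (hq1 : q < 1) (n b : ℕ) :
    An q (n+1) ((1:ℕ) :: List.replicate b 1) = An q n ((1:ℕ) :: List.replicate b 1)
      + q^(n+1)/(qnum q (n+1))^(b+1) := by
  rw [An_cons, An_cons]
  simp only [Nat.cast_one, sub_self, zero_mul, zpow_zero, pow_one]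
  have hlast : qbinom q n (n+1) = 0 := qbinom_of_gt (by omega)
  have hext : (∑ k ∈ Finset.Icc 1 n,
        (-1 : ℝ) ^ (k + 1) * q ^ (k * (k + 1) / 2) * qbinom q n k *
          (1 / qnum q k) * Wn q k (List.replicate b 1))
      = ∑ k ∈ Finset.Icc 1 (n+1),
        (-1 : ℝ) ^ (k + 1) * q ^ (k * (k + 1) / 2) * qbinom q n k *
          (1 / qnum q k) * Wn q k (List.replicate b 1) := by
    rw [Finset.sum_Icc_succ_top (by omega : 1 ≤ n+1), hlast]
    ring
  rw [hext, ← sub_eq_iff_eq_add', ← Finset.sum_sub_distrib]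
  have hstep : ∀ k ∈ Finset.Icc 1 (n+1),
      ((-1 : ℝ) ^ (k + 1) * q ^ (k * (k + 1) / 2) * qbinom q (n+1) k *
          (1 / qnum q k) * Wn q k (List.replicate b 1)
        - (-1 : ℝ) ^ (k + 1) * q ^ (k * (k + 1) / 2) * qbinom q n k *
          (1 / qnum q k) * Wn q k (List.replicate b 1))
      = (q^(n+1)/qnum q (n+1)) *
          ((-1:ℝ)^(k+1) * q^(k*(k-1)/2) * qbinom q (n+1) k * Wn q k (List.replicate b 1)) := by
    intro k hk
    rw [Finset.mem_Icc] at hk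
    obtain ⟨i, rfl⟩ : ∃ i, k = i + 1 := ⟨k - 1, by omega⟩
    have hp := pascal1 hq0 hq1 n i (by omega)
    have hk1 := key1 hq0 hq1 n i (by omega)
    linear_combination ((-1:ℝ)^(i+1+1) * Wn q (i+1) (List.replicate b 1)
        * q^((i+1)*((i+1)+1)/2) / qnum q (i+1)) * hp
      + ((-1:ℝ)^(i+1+1) * Wn q (i+1) (List.replicate b 1)) * hk1
  rw [Finset.sum_congr rfl hstep, ← Finset.mul_sum, Bsum hq0 hq1 b n,
    div_mul_div_comm, mul_one, ← pow_succ']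

lemma Zn_cons (q : ℝ) (n : ℕ) (s : ℕ) (t : List ℕ) :
    Zn q n (s :: t) = ∑ k ∈ Finset.Icc 1 n, q ^ k / (qnum q k) ^ s * Zn q k t := rfl

lemma Zn_nil (q : ℝ) (n : ℕ) : Zn q n [] = 1 := rfl

lemma Zn_zero (q : ℝ) (s : ℕ) (t : List ℕ) : Zn q 0 (s :: t) = 0 := by
  rw [Zn_cons]; simp

lemma An_zero (q : ℝ) (s : ℕ) (t : List ℕ) : An q 0 (s :: t) = 0 := by
  rw [An_cons]; simp

lemma Zn_succ (q : ℝ) (n : ℕ) (s : ℕ) (t : List ℕ) :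
    Zn q (n+1) (s :: t) = Zn q n (s :: t)
      + q^(n+1)/(qnum q (n+1))^s * Zn q (n+1) t := by
  rw [Zn_cons, Zn_cons, Finset.sum_Icc_succ_top (by omega : 1 ≤ n+1)]

lemma main_aux (hq0 : 0 < q) (hq1 : q < 1) (b : ℕ) : ∀ n a : ℕ,
    Zn q n (List.replicate a 1 ++ [b+1]) = An q n ((a+1) :: List.replicate b 1) := by
  intro n
  induction n with
  | zero =>
    intro a
    cases a with
    | zero => simp [Zn_zero, An_zero]
    | succ a => simp [List.replicate_succ, Zn_zero, An_zero]
  | succ n ihn =>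
    intro a
    induction a with
    | zero =>
      rw [List.replicate_zero, List.nil_append, Zn_succ, Zn_nil, mul_one,
        StepA1 hq0 hq1 n b]
      have h := ihn 0
      rw [List.replicate_zero, List.nil_append] at h
      rw [h]
    | succ a iha =>
      rw [List.replicate_succ, List.cons_append, Zn_succ, iha]
      rw [show (1:ℕ) :: (List.replicate a 1 ++ [b+1])
          = List.replicate (a+1) 1 ++ [b+1] by rw [List.replicate_succ, List.cons_append]]
      rw [ihn (a+1), show a+1+1 = a+2 from rfl,
        StepA2 hq0 hq1 n a (List.replicate b 1), pow_one]

/-- Corollary 2: `Z_n[{1}^{a-1}, b] = A_n[a, {1}^{b-1}]`. -/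
theorem duality_r1 (n a b : ℕ) (hn : 0 < n) (ha : 0 < a) (hb : 0 < b)
    (q : ℝ) (hq0 : 0 < q) (hq1 : q < 1) :
    Zn q n (List.replicate (a - 1) 1 ++ [b]) = An q n (a :: List.replicate (b - 1) 1) := by
  obtain ⟨a', rfl⟩ : ∃ a', a = a' + 1 := ⟨a - 1, by omega⟩
  obtain ⟨b', rfl⟩ : ∃ b', b = b' + 1 := ⟨b - 1, by omega⟩
  simpa using main_aux hq0 hq1 b' n a'
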